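/- For all α, β ∈ 2^ℕ that are not E₀*-equivalent and every i ∈ ℕ, the points ψ(α) and ψ(β) are not joined by any path inside the finite union H₀ ∪ H₁ ∪ ... ∪ Hᵢ, i.e. ¬ JoinedIn (⋃_{k≤i} Hₖ) (ψ α) (ψ β). -/

import Mathlib

/-- The Cantor space `2^ℕ`. -/
abbrev Cantor : Type := ℕ → Fin 2

/-- Eventual equality `E₀` on `2^ℕ`. -/
def E0 (α β : Cantor) : Prop := ∃ m : ℕ, ∀ n ≥ m, α n = β n

/-- Pointwise complement of a binary sequence. -/
def cmpl (α : Cantor) : Cantor := fun n => 1 - α n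

/-- The relation `E₀*`: `α E₀* β` iff `α E₀ β` or `α E₀ β̄`. -/
def E0star (α β : Cantor) : Prop := E0 α β ∨ E0 α (cmpl β)

/-- The relation `Fₙ`: agreement from coordinate `n` onwards. -/
def Frel (n : ℕ) (α β : Cantor) : Prop := ∀ i ≥ n, α i = β i

/-- The pieces `Hₖ` of the Knaster continuum. -/
def Hset (k : ℕ) : Set (ℝ × ℝ) :=
  if k = 0 then
    {p | 0 ≤ p.2 ∧ ∃ c ∈ cantorSet, (p.1 - 1/2)^2 + p.2^2 = (c - 1/2)^2}
  else
    {p | p.2 ≤ 0 ∧ ∃ c ∈ cantorSet ∩ Set.Icc ((2:ℝ)/3^k) (3/3^k),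
      (p.1 - 5/(2*3^k))^2 + p.2^2 = (c - 5/(2*3^k))^2}

/-- The Knaster continuum (buckethandle). -/
def knasterH : Set (ℝ × ℝ) := ⋃ k : ℕ, Hset k

/-- The map `ψ : 2^ℕ → ℝ²` sending `α` to the corresponding Cantor set point on the x-axis. -/
noncomputable def psi (α : Cantor) : ℝ × ℝ := (∑' i : ℕ, 2 * (α i : ℝ) / 3^(i+1), 0)

open Set



lemma preCantorSet_subset_unit : ∀ n, preCantorSet n ⊆ Set.Icc 0 1 := by
  intro n
  induction n with
  | zero => simp
  | succ n ih =>
    rintro x (⟨y, hy, rfl⟩ | ⟨y, hy, rfl⟩) <;>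
      obtain ⟨h0, h1⟩ := ih hy <;> constructor <;> [linarith; linarith; linarith; linarith]

lemma cantor_mem_Icc {x : ℝ} (hx : x ∈ cantorSet) : 0 ≤ x ∧ x ≤ 1 :=
  cantorSet_subset_unitInterval hx

lemma cantor_cases {x : ℝ} (hx : x ∈ cantorSet) : x ≤ 1/3 ∨ 2/3 ≤ x := by
  have h1 : x ∈ preCantorSet 1 := Set.mem_iInter.mp hx 1
  rcases h1 with ⟨y, hy, rfl⟩ | ⟨y, hy, rfl⟩ <;> obtain ⟨h0, h1⟩ := preCantorSet_subset_unit 0 hy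
  · left; linarith
  · right; linarith

lemma cantor_ne_half {x : ℝ} (hx : x ∈ cantorSet) : x ≠ 1/2 := by
  rcases cantor_cases hx with h | h <;> intro he <;> rw [he] at h <;> linarith

lemma cantor_left {x : ℝ} (hx : x ∈ cantorSet) (h : x ≤ 1/3) : 3*x ∈ cantorSet := by
  refine Set.mem_iInter.mpr fun n => ?_
  have h1 : x ∈ preCantorSet (n+1) := Set.mem_iInter.mp hx (n+1)
  rcases h1 with ⟨y, hy, rfl⟩ | ⟨y, hy, rfl⟩
  · have : 3 * (y / 3) = y := by ring
    rwa [this]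
  · obtain ⟨h0, _⟩ := preCantorSet_subset_unit n hy
    exfalso; have h' : (2+y)/3 ≤ 1/3 := h; linarith

lemma cantor_right {x : ℝ} (hx : x ∈ cantorSet) (h : 2/3 ≤ x) : 3*x - 2 ∈ cantorSet := by
  refine Set.mem_iInter.mpr fun n => ?_
  have h1 : x ∈ preCantorSet (n+1) := Set.mem_iInter.mp hx (n+1)
  rcases h1 with ⟨y, hy, rfl⟩ | ⟨y, hy, rfl⟩
  · obtain ⟨_, h1⟩ := preCantorSet_subset_unit n hy
    exfalso; have h' : 2/3 ≤ y/3 := h; linarith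
  · have : 3 * ((2 + y) / 3) - 2 = y := by ring
    rwa [this]

lemma cantor_div3 {x : ℝ} (hx : x ∈ cantorSet) : x/3 ∈ cantorSet := by
  refine Set.mem_iInter.mpr fun n => ?_
  match n with
  | 0 => obtain ⟨h0, h1⟩ := cantor_mem_Icc hx; exact ⟨by linarith, by linarith⟩
  | n+1 => exact Or.inl ⟨x, Set.mem_iInter.mp hx n, rfl⟩

lemma cantor_div3' {x : ℝ} (hx : x ∈ cantorSet) : (2+x)/3 ∈ cantorSet := by
  refine Set.mem_iInter.mpr fun n => ?_
  match n with
  | 0 => obtain ⟨h0, h1⟩ := cantor_mem_Icc hx; exact ⟨by linarith, by linarith⟩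
  | n+1 => exact Or.inr ⟨x, Set.mem_iInter.mp hx n, rfl⟩

lemma cantor_compl {x : ℝ} (hx : x ∈ cantorSet) : 1 - x ∈ cantorSet := by
  have key : ∀ n, ∀ y ∈ preCantorSet n, 1 - y ∈ preCantorSet n := by
    intro n
    induction n with
    | zero => rintro y ⟨h0, h1⟩; exact ⟨by linarith, by linarith⟩
    | succ n ih =>
      rintro y (⟨z, hz, rfl⟩ | ⟨z, hz, rfl⟩)
      · exact Or.inr ⟨1 - z, ih _ hz, by ring⟩
      · exact Or.inl ⟨1 - z, ih _ hz, by ring⟩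
  exact Set.mem_iInter.mpr fun n => key n x (Set.mem_iInter.mp hx n)

lemma cantor_reflect : ∀ k : ℕ, ∀ x ∈ cantorSet, 1 ≤ k → 2/3^k ≤ x → x ≤ 3/3^k →
    5/3^k - x ∈ cantorSet := by
  intro k
  induction k with
  | zero => intro x _ h; omega
  | succ k ih =>
    intro x hx _ h2 h3
    rcases Nat.eq_or_lt_of_le (Nat.one_le_iff_ne_zero.mpr (by omega) : 1 ≤ k + 1) with hk | hk
    · -- k + 1 = 1
      have hk0 : k = 0 := by omega
      subst hk0
      have h2' : 2/3 ≤ x := by norm_num at h2 ⊢; linarith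
      have hr := cantor_right hx h2'
      have hc := cantor_compl hr
      have := cantor_div3' hc
      have he : (2 + (1 - (3*x - 2)))/3 = 5/3^1 - x := by norm_num; ring
      rwa [he] at this
    · have hk1 : 1 ≤ k := by omega
      have h9 : (9:ℝ) ≤ 3^(k+1) := by
        calc (9:ℝ) = 3^2 := by norm_num
        _ ≤ 3^(k+1) := pow_le_pow_right₀ (by norm_num) (by omega)
      have hx3 : x ≤ 1/3 := by
        refine le_trans h3 ?_
        rw [div_le_div_iff₀ (by positivity) (by norm_num)]
        linarith
      have h3x : 3*x ∈ cantorSet := cantor_left hx hx3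
      have e2 : (2:ℝ)/3^k = 3*(2/3^(k+1)) := by field_simp; ring
      have e3 : (3:ℝ)/3^k = 3*(3/3^(k+1)) := by field_simp; ring
      have hmem := ih (3*x) h3x hk1 (by rw [e2]; linarith) (by rw [e3]; linarith)
      have := cantor_div3 hmem
      have he : (5/3^k - 3*x)/3 = 5/3^(k+1) - x := by field_simp; ring
      rwa [he] at this

noncomputable def gmap (x : ℝ) : ℝ := if 1/2 ≤ x then 3*x - 2 else 3*x

noncomputable def dig (j : ℕ) (x : ℝ) : Fin 2 := if 1/2 ≤ gmap^[j] x then 1 else 0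

lemma gmap_left {x : ℝ} (h : x < 1/2) : gmap x = 3*x := if_neg (not_le.mpr h)
lemma gmap_right {x : ℝ} (h : 1/2 ≤ x) : gmap x = 3*x - 2 := if_pos h

lemma gmap_mem {x : ℝ} (hx : x ∈ cantorSet) : gmap x ∈ cantorSet := by
  rcases cantor_cases hx with h | h
  · rw [gmap_left (by linarith)]; exact cantor_left hx h
  · rw [gmap_right (by linarith)]; exact cantor_right hx h

lemma gIter_mem {x : ℝ} (hx : x ∈ cantorSet) (j : ℕ) : gmap^[j] x ∈ cantorSet := by
  induction j with
  | zero => exact hx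
  | succ j ih => rw [Function.iterate_succ_apply']; exact gmap_mem ih

lemma gmap_compl {x : ℝ} (hx : x ∈ cantorSet) : gmap (1 - x) = 1 - gmap x := by
  rcases cantor_cases hx with h | h
  · rw [gmap_right (show 1/2 ≤ 1 - x by linarith), gmap_left (show x < 1/2 by linarith)]; ring
  · rw [gmap_left (show 1 - x < 1/2 by linarith), gmap_right (show 1/2 ≤ x by linarith)]; ring

lemma gIter_compl {x : ℝ} (hx : x ∈ cantorSet) (j : ℕ) :
    gmap^[j] (1 - x) = 1 - gmap^[j] x := by
  induction j generalizing x with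
  | zero => simp
  | succ j ih =>
    rw [Function.iterate_succ_apply, Function.iterate_succ_apply, gmap_compl hx, ih (gmap_mem hx)]

lemma dig_compl {x : ℝ} (hx : x ∈ cantorSet) (j : ℕ) : dig j (1 - x) = 1 + dig j x := by
  have hy := gIter_mem hx j
  unfold dig
  rw [gIter_compl hx j]
  rcases cantor_cases hy with h | h
  · rw [if_pos (show (1:ℝ)/2 ≤ 1 - gmap^[j] x by linarith),
      if_neg (show ¬ ((1:ℝ)/2 ≤ gmap^[j] x) by intro hc; linarith)]
    decide
  · rw [if_neg (show ¬ ((1:ℝ)/2 ≤ 1 - gmap^[j] x) by intro hc; linarith),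
      if_pos (show (1:ℝ)/2 ≤ gmap^[j] x by linarith)]
    decide

lemma dig_shift (k m : ℕ) (x : ℝ) : dig (k + m) x = dig m (gmap^[k] x) := by
  unfold dig
  rw [← Function.iterate_add_apply, Nat.add_comm m k]

lemma gIter_scale : ∀ k : ℕ, 1 ≤ k → ∀ x : ℝ, 2/3^k ≤ x → x ≤ 3/3^k →
    gmap^[k] x = 3^k * x - 2 := by
  intro k
  induction k with
  | zero => omega
  | succ k ih =>
    intro _ x h2 h3
    rcases Nat.eq_zero_or_pos k with hk | hk
    · subst hk
      norm_num at h2 h3 ⊢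
      rw [gmap_right (by linarith)]
    · have h9 : (9:ℝ) ≤ 3^(k+1) := by
        calc (9:ℝ) = 3^2 := by norm_num
        _ ≤ 3^(k+1) := pow_le_pow_right₀ (by norm_num) (by omega)
      have hx2 : x < 1/2 := by
        have : (3:ℝ)/3^(k+1) ≤ 1/3 := by
          rw [div_le_div_iff₀ (by positivity) (by norm_num)]; linarith
        linarith
      rw [Function.iterate_succ_apply, gmap_left hx2]
      have e2 : (2:ℝ)/3^k = 3*(2/3^(k+1)) := by field_simp; ring
      have e3 : (3:ℝ)/3^k = 3*(3/3^(k+1)) := by field_simp; ring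
      rw [ih hk (3*x) (by rw [e2] at *; linarith) (by rw [e3] at *; linarith)]
      ring

lemma dig_reflect {k j : ℕ} (hk : 1 ≤ k) (hkj : k ≤ j) {x : ℝ} (hx : x ∈ cantorSet)
    (h2 : 2/3^k ≤ x) (h3 : x ≤ 3/3^k) : dig j (5/3^k - x) = 1 + dig j x := by
  obtain ⟨m, rfl⟩ := Nat.exists_eq_add_of_le hkj
  have hy2 : 2/3^k ≤ 5/3^k - x := by
    have : (5:ℝ)/3^k - 3/3^k = 2/3^k := by ring
    linarith
  have hy3 : 5/3^k - x ≤ 3/3^k := by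
    have : (5:ℝ)/3^k - 2/3^k = 3/3^k := by ring
    linarith
  rw [dig_shift k m, dig_shift k m, gIter_scale k hk _ hy2 hy3, gIter_scale k hk x h2 h3]
  have he : 3^k * (5/3^k - x) - 2 = 1 - (3^k * x - 2) := by
    have h3k : (3:ℝ)^k ≠ 0 := by positivity
    field_simp
    ring
  rw [he]
  have hz : 3^k * x - 2 ∈ cantorSet := by
    rw [← gIter_scale k hk x h2 h3]; exact gIter_mem hx k
  exact dig_compl hz m

noncomputable def Ssum (α : Cantor) : ℝ := ∑' i : ℕ, 2 * (α i : ℝ) / 3^(i+1)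

lemma fin2_cases (a : Fin 2) : a = 0 ∨ a = 1 := by fin_cases a <;> simp

lemma fin2_le (a : Fin 2) : (a : ℝ) ≤ 1 := by
  rcases fin2_cases a with h | h <;> subst h <;> norm_num

lemma fin2_nonneg (a : Fin 2) : (0:ℝ) ≤ (a : ℝ) := by
  rcases fin2_cases a with h | h <;> subst h <;> norm_num

lemma Ssum_summable (α : Cantor) : Summable (fun i => 2 * (α i : ℝ) / 3^(i+1)) := by
  have hg : Summable (fun i : ℕ => ((2:ℝ)/3) * (1/3)^i) :=
    (summable_geometric_of_lt_one (by norm_num) (by norm_num : (1:ℝ)/3 < 1)).mul_left _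
  refine Summable.of_nonneg_of_le (fun i => by positivity) (fun i => ?_) hg
  have h := fin2_le (α i)
  have h3 : (0:ℝ) < 3^(i+1) := by positivity
  have he : ((2:ℝ)/3) * (1/3)^i = 2 / 3^(i+1) := by rw [pow_succ, div_pow, one_pow, div_mul_div_comm, mul_one, mul_comm (3:ℝ)]
  rw [he, div_le_div_iff₀ h3 h3]
  nlinarith

lemma Ssum_nonneg (α : Cantor) : 0 ≤ Ssum α :=
  tsum_nonneg (fun i => by positivity)

lemma geom_third : ∑' i : ℕ, ((2:ℝ)/3) * (1/3)^i = 1 := by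
  rw [tsum_mul_left, tsum_geometric_of_lt_one (by norm_num) (by norm_num)]
  norm_num

lemma Ssum_le_one (α : Cantor) : Ssum α ≤ 1 := by
  rw [← geom_third]
  apply Summable.tsum_le_tsum _ (Ssum_summable α)
    ((summable_geometric_of_lt_one (by norm_num) (by norm_num)).mul_left _)
  intro i
  have h := fin2_le (α i)
  have h3 : (0:ℝ) < 3^(i+1) := by positivity
  have he : ((2:ℝ)/3) * (1/3)^i = 2 / 3^(i+1) := by
    rw [pow_succ, div_pow, one_pow, div_mul_div_comm, mul_one, mul_comm (3:ℝ)]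
  rw [he, div_le_div_iff₀ h3 h3]
  nlinarith

lemma Ssum_shift (α : Cantor) :
    Ssum α = 2 * (α 0 : ℝ) / 3 + (Ssum (fun i => α (i+1))) / 3 := by
  unfold Ssum
  rw [Summable.tsum_eq_zero_add (Ssum_summable α), ← tsum_div_const]
  congr 1
  · norm_num
  · refine tsum_congr fun i => ?_
    rw [pow_succ]
    field_simp


lemma gmap_Ssum (α : Cantor) : gmap (Ssum α) = Ssum (fun i => α (i+1)) := by
  have hs := Ssum_shift α
  have h0 := Ssum_nonneg (fun i => α (i+1))
  have h1 := Ssum_le_one (fun i => α (i+1))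
  rcases fin2_cases (α 0) with h | h <;> rw [h] at hs <;> norm_num at hs
  · rw [hs, gmap_left (by linarith)]; ring
  · rw [hs, gmap_right (by linarith)]; ring

lemma dig_Ssum : ∀ j (α : Cantor), dig j (Ssum α) = α j := by
  intro j
  induction j with
  | zero =>
    intro α
    have hs := Ssum_shift α
    have h0 := Ssum_nonneg (fun i => α (i+1))
    have h1 := Ssum_le_one (fun i => α (i+1))
    unfold dig
    rcases fin2_cases (α 0) with h | h <;> rw [h] at hs ⊢ <;> norm_num at hs
    · rw [Function.iterate_zero_apply, if_neg (by rw [hs]; intro hc; linarith)]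
    · rw [Function.iterate_zero_apply, if_pos (by rw [hs]; linarith)]
  | succ j ih =>
    intro α
    have : j + 1 = 1 + j := by omega
    rw [this, dig_shift 1 j, Function.iterate_one, gmap_Ssum, ih]
    try (congr 1 <;> omega)

lemma Ssum_compl (α : Cantor) : Ssum (cmpl α) = 1 - Ssum α := by
  have hone : Summable (fun i : ℕ => (2:ℝ)/3^(i+1)) := by
    refine ((summable_geometric_of_lt_one (by norm_num)
      (show (1:ℝ)/3 < 1 by norm_num)).mul_left ((2:ℝ)/3)).congr fun i => ?_
    rw [pow_succ, div_pow, one_pow, div_mul_div_comm, mul_one, mul_comm (3:ℝ)]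
  have h2 : ∑' i : ℕ, (2:ℝ)/3^(i+1) = 1 := by
    rw [← geom_third]
    refine tsum_congr fun i => ?_
    rw [pow_succ, div_pow, one_pow, div_mul_div_comm, mul_one, mul_comm (3:ℝ)]
  unfold Ssum
  have he : (fun i => 2 * ((cmpl α i) : ℝ)/3^(i+1))
      = fun i => (2:ℝ)/3^(i+1) - 2*((α i) : ℝ)/3^(i+1) := by
    funext i
    rcases fin2_cases (α i) with h | h <;> simp [cmpl, h] <;> try ring
  rw [he, Summable.tsum_sub hone (Ssum_summable α), h2]

noncomputable def efun (N : ℕ) (x : ℝ) : Cantor := fun n => dig (N+1+n) x + dig N x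

lemma fin2_add_add : ∀ a b : Fin 2, (1 + a) + (1 + b) = a + b := by decide

lemma efun_compl {x : ℝ} (hx : x ∈ cantorSet) (N : ℕ) : efun N (1 - x) = efun N x := by
  funext n
  unfold efun
  rw [dig_compl hx, dig_compl hx, fin2_add_add]

lemma efun_reflect {k N : ℕ} (hk : 1 ≤ k) (hkN : k ≤ N) {x : ℝ} (hx : x ∈ cantorSet)
    (h2 : 2/3^k ≤ x) (h3 : x ≤ 3/3^k) : efun N (5/3^k - x) = efun N x := by
  funext n
  unfold efun
  rw [dig_reflect hk (by omega) hx h2 h3, dig_reflect hk hkN hx h2 h3, fin2_add_add]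

lemma efun_half {x : ℝ} (hx : x ∈ cantorSet) (N : ℕ) :
    efun N (1/2 + |x - 1/2|) = efun N x := by
  rcases le_or_gt (1/2) x with h | h
  · rw [abs_of_nonneg (by linarith), show 1/2 + (x - 1/2) = x by ring]
  · rw [abs_of_neg (by linarith), show 1/2 + -(x - 1/2) = 1 - x by ring]
    exact efun_compl hx N

lemma efun_reflect_abs {k N : ℕ} (hk : 1 ≤ k) (hkN : k ≤ N) {x : ℝ} (hx : x ∈ cantorSet)
    (h2 : 2/3^k ≤ x) (h3 : x ≤ 3/3^k) :
    efun N (5/(2*3^k) + |x - 5/(2*3^k)|) = efun N x := by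
  rcases le_or_gt (5/(2*3^k)) x with h | h
  · rw [abs_of_nonneg (by linarith), show 5/(2*3^k) + (x - 5/(2*3^k)) = x by ring]
  · rw [abs_of_neg (by linarith),
      show 5/(2*3^k) + -(x - 5/(2*3^k)) = 5/3^k - x by field_simp; ring]
    exact efun_reflect hk hkN hx h2 h3

lemma continuousOn_union_closed {X Y : Type*} [TopologicalSpace X] [TopologicalSpace Y]
    {f : X → Y} {s t : Set X} (hs : IsClosed s) (ht : IsClosed t)
    (hfs : ContinuousOn f s) (hft : ContinuousOn f t) : ContinuousOn f (s ∪ t) := by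
  intro x _
  have Hs : ContinuousWithinAt f s x := by
    by_cases h : x ∈ s
    · exact hfs x h
    · exact continuousWithinAt_of_notMem_closure (by rwa [hs.closure_eq])
  have Ht : ContinuousWithinAt f t x := by
    by_cases h : x ∈ t
    · exact hft x h
    · exact continuousWithinAt_of_notMem_closure (by rwa [ht.closure_eq])
  exact Hs.union Ht

lemma cantor_eq_union : cantorSet =
    (cantorSet ∩ Set.Iic (1/3)) ∪ (cantorSet ∩ Set.Ici (2/3)) := by
  apply Set.Subset.antisymm
  · intro x hx
    rcases cantor_cases hx with h | h
    · exact Or.inl ⟨hx, h⟩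
    · exact Or.inr ⟨hx, h⟩
  · rintro x (⟨hx, _⟩ | ⟨hx, _⟩) <;> exact hx

lemma contOn_gmap : ContinuousOn gmap cantorSet := by
  rw [cantor_eq_union]
  apply continuousOn_union_closed (isClosed_cantorSet.inter isClosed_Iic)
    (isClosed_cantorSet.inter isClosed_Ici)
  · exact ContinuousOn.congr (continuous_const.mul continuous_id).continuousOn
      (fun x ⟨_, h⟩ => gmap_left (by simp at h; linarith))
  · exact ContinuousOn.congr ((continuous_const.mul continuous_id).sub
      continuous_const).continuousOn (fun x ⟨_, h⟩ => gmap_right (by simp at h; linarith))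

lemma contOn_gIter (j : ℕ) : ContinuousOn (gmap^[j]) cantorSet := by
  induction j with
  | zero => simpa using continuousOn_id
  | succ j ih =>
    rw [Function.iterate_succ']
    exact ContinuousOn.comp contOn_gmap ih (fun x hx => gIter_mem hx j)

lemma contOn_dig0 : ContinuousOn (dig 0) cantorSet := by
  rw [cantor_eq_union]
  apply continuousOn_union_closed (isClosed_cantorSet.inter isClosed_Iic)
    (isClosed_cantorSet.inter isClosed_Ici)
  · refine ContinuousOn.congr (continuousOn_const (c := (0 : Fin 2))) ?_
    rintro x ⟨_, h⟩
    simp only [Set.mem_Iic] at h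
    unfold dig
    rw [Function.iterate_zero_apply, if_neg (by intro hc; linarith)]
  · refine ContinuousOn.congr (continuousOn_const (c := (1 : Fin 2))) ?_
    rintro x ⟨_, h⟩
    simp only [Set.mem_Ici] at h
    unfold dig
    rw [Function.iterate_zero_apply, if_pos (by linarith)]

lemma dig_eq_dig0 (j : ℕ) (x : ℝ) : dig j x = dig 0 (gmap^[j] x) := by
  unfold dig
  rw [Function.iterate_zero_apply]

lemma contOn_dig (j : ℕ) : ContinuousOn (dig j) cantorSet := by
  refine ContinuousOn.congr (ContinuousOn.comp contOn_dig0 (contOn_gIter j)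
    (fun x hx => gIter_mem hx j)) ?_
  intro x _
  exact dig_eq_dig0 j x

lemma contOn_efun (N : ℕ) : ContinuousOn (efun N) cantorSet := by
  apply continuousOn_pi.mpr
  intro n
  have h1 := (contOn_dig (N+1+n)).prodMk (contOn_dig N)
  exact (continuous_of_discreteTopology
    (f := fun p : Fin 2 × Fin 2 => p.1 + p.2)).comp_continuousOn h1

noncomputable def kOf (x : ℝ) : ℕ := (⌊Real.logb 3 (3/x)⌋).toNat

lemma kOf_eq {k : ℕ} {x : ℝ} (h2 : 2/3^k ≤ x) (h3 : x ≤ 3/3^k) : kOf x = k := by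
  have h3k : (0:ℝ) < 3^k := by positivity
  have hx0 : 0 < x := lt_of_lt_of_le (by positivity) h2
  have hb : (1:ℝ) < 3 := by norm_num
  have h2' : 2 ≤ x * 3^k := by
    rw [div_le_iff₀ h3k] at h2; linarith
  have hlow : (3:ℝ)^k ≤ 3/x := by
    rw [le_div_iff₀ hx0]
    rw [le_div_iff₀ h3k] at h3
    linarith
  have hhigh : 3/x < 3^(k+1) := by
    rw [div_lt_iff₀ hx0, pow_succ]
    nlinarith
  have hfloor : ⌊Real.logb 3 (3/x)⌋ = (k : ℤ) := by
    rw [Int.floor_eq_iff]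
    constructor
    · rw [Real.le_logb_iff_rpow_le hb (by positivity)]
      push_cast
      rw [Real.rpow_natCast]
      exact hlow
    · rw [Real.logb_lt_iff_lt_rpow hb (by positivity)]
      push_cast
      rw [show ((k:ℝ) + 1) = ((k+1 : ℕ) : ℝ) by push_cast; ring, Real.rpow_natCast]
      exact hhigh
  unfold kOf
  rw [hfloor]
  exact Int.toNat_natCast k

noncomputable def rad (a : ℝ) (p : ℝ × ℝ) : ℝ := Real.sqrt ((p.1 - a)^2 + p.2^2)

lemma continuous_rad (a : ℝ) : Continuous (rad a) :=
  Real.continuous_sqrt.comp (((continuous_fst.sub continuous_const).pow 2).add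
    (continuous_snd.pow 2))

lemma rad_eq {a c : ℝ} {p : ℝ × ℝ} (h : (p.1 - a)^2 + p.2^2 = (c - a)^2) :
    rad a p = |c - a| := by
  unfold rad
  rw [h, Real.sqrt_sq_eq_abs]

lemma cantor_half_abs {c : ℝ} (hc : c ∈ cantorSet) : 1/2 + |c - 1/2| ∈ cantorSet := by
  rcases le_or_gt (1/2) c with h | h
  · rw [abs_of_nonneg (by linarith), show 1/2 + (c - 1/2) = c by ring]; exact hc
  · rw [abs_of_neg (by linarith), show 1/2 + -(c - 1/2) = 1 - c by ring]
    exact cantor_compl hc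

lemma cantor_refl_abs {k : ℕ} (hk : 1 ≤ k) {c : ℝ} (hc : c ∈ cantorSet)
    (h2 : 2/3^k ≤ c) (h3 : c ≤ 3/3^k) : 5/(2*3^k) + |c - 5/(2*3^k)| ∈ cantorSet := by
  rcases le_or_gt (5/(2*3^k)) c with h | h
  · rw [abs_of_nonneg (by linarith), show 5/(2*3^k) + (c - 5/(2*3^k)) = c by ring]; exact hc
  · rw [abs_of_neg (by linarith),
      show 5/(2*3^k) + -(c - 5/(2*3^k)) = 5/3^k - c by field_simp; ring]
    exact cantor_reflect k c hc hk h2 h3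

lemma Hset_zero_def : Hset 0 =
    {p : ℝ × ℝ | 0 ≤ p.2 ∧ ∃ c ∈ cantorSet, (p.1 - 1/2)^2 + p.2^2 = (c - 1/2)^2} := by
  simp [Hset]

lemma Hset_pos_def {k : ℕ} (hk : k ≠ 0) : Hset k =
    {p : ℝ × ℝ | p.2 ≤ 0 ∧ ∃ c ∈ cantorSet ∩ Set.Icc ((2:ℝ)/3^k) (3/3^k),
      (p.1 - 5/(2*3^k))^2 + p.2^2 = (c - 5/(2*3^k))^2} := by
  simp [Hset, hk]

lemma isClosed_Hset (k : ℕ) : IsClosed (Hset k) := by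
  rcases Nat.eq_zero_or_pos k with hk | hk
  · subst hk
    rw [Hset_zero_def]
    have : {p : ℝ × ℝ | 0 ≤ p.2 ∧ ∃ c ∈ cantorSet, (p.1 - 1/2)^2 + p.2^2 = (c - 1/2)^2}
        = {p : ℝ × ℝ | 0 ≤ p.2} ∩ (fun p : ℝ × ℝ => (p.1 - 1/2)^2 + p.2^2) ⁻¹'
          ((fun c => (c - 1/2)^2) '' cantorSet) := by
      ext p
      simp only [Set.mem_setOf_eq, Set.mem_inter_iff, Set.mem_preimage, Set.mem_image]
      constructor
      · rintro ⟨h1, c, hc, he⟩; exact ⟨h1, c, hc, he.symm⟩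
      · rintro ⟨h1, c, hc, he⟩; exact ⟨h1, c, hc, he.symm⟩
    rw [this]
    exact (isClosed_le continuous_const continuous_snd).inter
      (((isCompact_cantorSet.image (by fun_prop)).isClosed).preimage (by fun_prop))
  · rw [Hset_pos_def (by omega)]
    have : {p : ℝ × ℝ | p.2 ≤ 0 ∧ ∃ c ∈ cantorSet ∩ Set.Icc ((2:ℝ)/3^k) (3/3^k),
          (p.1 - 5/(2*3^k))^2 + p.2^2 = (c - 5/(2*3^k))^2}
        = {p : ℝ × ℝ | p.2 ≤ 0} ∩ (fun p : ℝ × ℝ => (p.1 - 5/(2*3^k))^2 + p.2^2) ⁻¹'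
          ((fun c => (c - 5/(2*3^k))^2) '' (cantorSet ∩ Set.Icc ((2:ℝ)/3^k) (3/3^k))) := by
      ext p
      simp only [Set.mem_setOf_eq, Set.mem_inter_iff, Set.mem_preimage, Set.mem_image]
      constructor
      · rintro ⟨h1, c, hc, he⟩; exact ⟨h1, c, hc, he.symm⟩
      · rintro ⟨h1, c, hc, he⟩; exact ⟨h1, c, hc, he.symm⟩
    rw [this]
    exact (isClosed_le continuous_snd continuous_const).inter
      ((((isCompact_cantorSet.inter_right isClosed_Icc).image (by fun_prop)).isClosed).preimage
        (by fun_prop))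

noncomputable def Phi (N : ℕ) (p : ℝ × ℝ) : Cantor :=
  if 0 ≤ p.2 then efun N (1/2 + rad (1/2) p)
  else efun N (5/(2*3^(kOf p.1)) + rad (5/(2*3^(kOf p.1))) p)

lemma contOn_Phi_H0 (N : ℕ) : ContinuousOn (Phi N) (Hset 0) := by
  have hmaps : ∀ p ∈ Hset 0, 1/2 + rad (1/2) p ∈ cantorSet := by
    intro p hp
    rw [Hset_zero_def] at hp
    obtain ⟨_, c, hc, he⟩ := hp
    rw [rad_eq he]
    exact cantor_half_abs hc
  refine ContinuousOn.congr (ContinuousOn.comp (contOn_efun N)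
    ((continuous_const.add (continuous_rad (1/2))).continuousOn) hmaps) ?_
  intro p hp
  rw [Hset_zero_def] at hp
  exact if_pos hp.1

lemma Hset_pos_sub {k : ℕ} (hk : 1 ≤ k) {p : ℝ × ℝ} (hp : p ∈ Hset k) :
    p.2 ≤ 0 ∧ 2/3^k ≤ p.1 ∧ p.1 ≤ 3/3^k ∧
      ∃ c ∈ cantorSet ∩ Set.Icc ((2:ℝ)/3^k) (3/3^k),
        (p.1 - 5/(2*3^k))^2 + p.2^2 = (c - 5/(2*3^k))^2 := by
  rw [Hset_pos_def (by omega)] at hp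
  obtain ⟨hy, c, hc, he⟩ := hp
  have h3k : (0:ℝ) < 3^k := by positivity
  have habs : |c - 5/(2*3^k)| ≤ 1/(2*3^k) := by
    rw [abs_le]
    obtain ⟨_, hc2, hc3⟩ := hc
    constructor
    · have : (2:ℝ)/3^k = 5/(2*3^k) - 1/(2*3^k) := by field_simp; ring
      linarith [this ▸ hc2]
    · have : (3:ℝ)/3^k = 5/(2*3^k) + 1/(2*3^k) := by field_simp; ring
      linarith [this ▸ hc3]
  have hx1 : |p.1 - 5/(2*3^k)| ≤ |c - 5/(2*3^k)| := by
    have hsq : (p.1 - 5/(2*3^k))^2 ≤ (c - 5/(2*3^k))^2 := by nlinarith [sq_nonneg p.2]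
    have := Real.sqrt_le_sqrt hsq
    rwa [Real.sqrt_sq_eq_abs, Real.sqrt_sq_eq_abs] at this
  have hx2 := abs_le.mp (hx1.trans habs)
  have e1 : (2:ℝ)/3^k = 5/(2*3^k) - 1/(2*3^k) := by field_simp; ring
  have e2 : (3:ℝ)/3^k = 5/(2*3^k) + 1/(2*3^k) := by field_simp; ring
  exact ⟨hy, by rw [e1]; linarith [hx2.1], by rw [e2]; linarith [hx2.2], c, hc, he⟩

lemma contOn_Phi_Hk {N k : ℕ} (hk : 1 ≤ k) (hkN : k ≤ N) : ContinuousOn (Phi N) (Hset k) := by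
  have hmaps : ∀ p ∈ Hset k, 5/(2*3^k) + rad (5/(2*3^k)) p ∈ cantorSet := by
    intro p hp
    obtain ⟨_, _, _, c, ⟨hcC, hc2, hc3⟩, he⟩ := Hset_pos_sub hk hp
    rw [rad_eq he]
    exact cantor_refl_abs hk hcC hc2 hc3
  refine ContinuousOn.congr (ContinuousOn.comp (contOn_efun N)
    ((continuous_const.add (continuous_rad (5/(2*3^k)))).continuousOn) hmaps) ?_
  intro p hp
  obtain ⟨hy, hp2, hp3, c, ⟨hcC, hc2, hc3⟩, he⟩ := Hset_pos_sub hk hp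
  rcases lt_or_eq_of_le hy with hlt | heq0
  · unfold Phi
    rw [if_neg (by exact not_le.mpr hlt), kOf_eq hp2 hp3]
    simp only [Function.comp_apply, Pi.add_apply]
  · -- p.2 = 0
    have hy0 : p.2 = 0 := heq0
    -- p.1 ∈ cantorSet and the two branch values agree
    have habs : |p.1 - 5/(2*3^k)| = |c - 5/(2*3^k)| := by
      rw [← Real.sqrt_sq_eq_abs, ← Real.sqrt_sq_eq_abs]
      congr 1
      nlinarith [hy0]
    have hx1 : p.1 = c ∨ p.1 = 5/3^k - c := by
      rcases abs_eq_abs.mp habs with h | h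
      · left; linarith
      · right; field_simp at h ⊢; linarith
    have hx1C : p.1 ∈ cantorSet ∧ 2/3^k ≤ p.1 ∧ p.1 ≤ 3/3^k := by
      rcases hx1 with h | h
      · exact ⟨h ▸ hcC, hp2, hp3⟩
      · exact ⟨h ▸ cantor_reflect k c hcC hk hc2 hc3, hp2, hp3⟩
    have hrad0 : rad (1/2) p = |p.1 - 1/2| := by
      unfold rad
      rw [hy0]
      norm_num [Real.sqrt_sq_eq_abs]
    have hradk : rad (5/(2*3^k)) p = |p.1 - 5/(2*3^k)| := by
      unfold rad
      rw [hy0]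
      norm_num [Real.sqrt_sq_eq_abs]
    unfold Phi
    rw [if_pos heq0.ge, hrad0, efun_half hx1C.1]
    simp only [Function.comp_apply, Pi.add_apply]
    rw [hradk, efun_reflect_abs hk hkN hx1C.1 hx1C.2.1 hx1C.2.2]

lemma contOn_Phi_union {N : ℕ} (i : ℕ) (hiN : i ≤ N) :
    IsClosed (⋃ k ≤ i, Hset k) ∧ ContinuousOn (Phi N) (⋃ k ≤ i, Hset k) := by
  induction i with
  | zero =>
    simp only [Nat.le_zero, Set.iUnion_iUnion_eq_left]
    exact ⟨isClosed_Hset 0, contOn_Phi_H0 N⟩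
  | succ i ih =>
    obtain ⟨ihc, ihcont⟩ := ih (by omega)
    rw [Set.biUnion_le_succ]
    exact ⟨ihc.union (isClosed_Hset (i+1)),
      continuousOn_union_closed ihc (isClosed_Hset (i+1)) ihcont
        (contOn_Phi_Hk (by omega) (by omega))⟩

lemma fin2_sub_add : ∀ a b : Fin 2, (1 - a) + (1 - b) = a + b := by decide

lemma Phi_psi (N : ℕ) (α : Cantor) : ∀ n, Phi N (psi α) n = α (N+1+n) + α N := by
  intro n
  have h0 := Ssum_nonneg α
  have h1 := Ssum_le_one α
  show Phi N (Ssum α, 0) n = _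
  unfold Phi
  rw [if_pos (le_refl (0:ℝ))]
  have hr : rad (1/2) ((Ssum α : ℝ), (0:ℝ)) = |Ssum α - 1/2| := by
    unfold rad
    norm_num [Real.sqrt_sq_eq_abs]
  rw [hr]
  rcases le_or_gt (1/2) (Ssum α) with h | h
  · rw [abs_of_nonneg (by linarith), show 1/2 + (Ssum α - 1/2) = Ssum α by ring]
    unfold efun
    rw [dig_Ssum, dig_Ssum]
  · rw [abs_of_neg (by linarith), show 1/2 + -(Ssum α - 1/2) = 1 - Ssum α by ring,
      ← Ssum_compl]
    unfold efun
    rw [dig_Ssum, dig_Ssum]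
    exact fin2_sub_add (α (N+1+n)) (α N)

lemma fin2_ne_eq : ∀ a b : Fin 2, a ≠ b → a = 1 - b := by decide

lemma fin2_cancel : ∀ a b c d : Fin 2, a + c = b + d → c = d → a = b := by decide

lemma fin2_flip : ∀ a b c d : Fin 2, a + c = b + d → c ≠ d → a = 1 - b := by decide

theorem psi_not_joinedIn_finite_union' :
    ∀ α β : Cantor, ¬ E0star α β →
      ∀ i : ℕ, ¬ JoinedIn (⋃ k ≤ i, Hset k) (psi α) (psi β) := by
  intro α β hne i hJ
  set N := i + 1 with hN
  obtain ⟨γ, hγ⟩ := hJ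
  have hU := (contOn_Phi_union (N := N) i (by omega)).2
  have hc : Continuous (Phi N ∘ γ) :=
    hU.comp_continuous γ.continuous_toFun (fun t => hγ t)
  have hsub : (Set.range (Phi N ∘ γ)).Subsingleton :=
    (isPreconnected_range hc).subsingleton
  have h01 : Phi N (psi α) = Phi N (psi β) := by
    have h0 : Phi N (γ 0) = Phi N (γ 1) := hsub ⟨0, rfl⟩ ⟨1, rfl⟩
    rwa [γ.source, γ.target] at h0
  have key : ∀ n, α (N+1+n) + α N = β (N+1+n) + β N := by
    intro n
    rw [← Phi_psi N α n, ← Phi_psi N β n, h01]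
  by_cases hNN : α N = β N
  · refine hne (Or.inl ⟨N+1, fun n hn => ?_⟩)
    obtain ⟨m, rfl⟩ := Nat.exists_eq_add_of_le hn
    exact fin2_cancel _ _ _ _ (key m) hNN
  · refine hne (Or.inr ⟨N, fun n hn => ?_⟩)
    rcases Nat.eq_or_lt_of_le hn with heq | hlt
    · show α n = 1 - β n
      rw [← heq]
      exact fin2_ne_eq _ _ (heq ▸ hNN)
    · obtain ⟨m, rfl⟩ := Nat.exists_eq_add_of_le (show N + 1 ≤ n by omega)
      show α (N+1+m) = 1 - β (N+1+m)
      exact fin2_flip _ _ _ _ (key m) hNN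


/-- If `α` and `β` are not `E₀*`-equivalent, then for every `i`, the points
`ψ α` and `ψ β` are not joined by any path inside `H₀ ∪ ⋯ ∪ Hᵢ`. -/
theorem psi_not_joinedIn_finite_union :
    ∀ α β : Cantor, ¬ E0star α β →
      ∀ i : ℕ, ¬ JoinedIn (⋃ k ≤ i, Hset k) (psi α) (psi β) := by
  exact psi_not_joinedIn_finite_union'
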